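/- Let q be a root of unity with q^2 ≠ 1, let ell be the minimal positive integer with q^{2 ell} = 1, and suppose ell divides n - 2p + 1 (i.e. (n,p) is critical). Then the Gram determinant prod_{j=1}^{p} ([n-2p+1+j]_q / [j]_q)^{d_{n,p-j}} is nonzero, where [m]_q = (q^m - q^{-m})/(q - q^{-1}) and d_{n,p} = binom(n,p) - binom(n,p-1); more precisely each factor [m ell + j]_q/[j]_q is nonzero because the zeros of numerator and denominator at j a multiple of ell cancel (using [m ell]_q = [ell]_q [m]_{q^ell}). -/

import Mathlib

open scoped Classical

/-- The `q`-number `[m]_x = (x^m - x^{-m})/(x - x⁻¹)`, with `[m]_x = m x^{m-1}`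
when `x = ±1`. -/
noncomputable def qnum (x : ℂ) (m : ℤ) : ℂ :=
  if x = 1 ∨ x = -1 then (m : ℂ) * x ^ (m - 1)
  else (x ^ m - x ^ (-m)) / (x - x⁻¹)

/-- `d_{n,p} = binom(n,p) - binom(n,p-1)`, with `binom(n,-1) = 0`. -/
def dd (n k : ℕ) : ℕ := n.choose k - (if k = 0 then 0 else n.choose (k - 1))

/-- Let `q` be a root of unity with `q² ≠ 1`, `ℓ` minimal positive with
`q^(2ℓ) = 1`, and suppose `ℓ ∣ n - 2p + 1` (`(n,p)` critical).  Then the Gram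
determinant `∏_{j=1}^p ([n-2p+1+j]/[j])^{d_{n,p-j}}` is nonzero, the factors
with `ℓ ∣ j` being interpreted via the cancellation
`[mℓ]_q = [ℓ]_q [m]_{q^ℓ}` of the simple zeros of numerator and denominator. -/
theorem stmt_9 (q : ℂ) (hq : q ≠ 0) (hq2 : q ^ 2 ≠ 1) (ℓ n p : ℕ)
    (hℓpos : 0 < ℓ) (hℓ : q ^ (2 * ℓ) = 1)
    (hmin : ∀ k : ℕ, 0 < k → q ^ (2 * k) = 1 → ℓ ≤ k)
    (hnp : 2 * p ≤ n) (hdiv : (ℓ : ℤ) ∣ ((n : ℤ) - 2 * p + 1)) :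
    (∏ j ∈ Finset.Icc 1 p,
      (if (ℓ : ℤ) ∣ (j : ℤ) then
          qnum (q ^ ℓ) (((n : ℤ) - 2 * p + 1 + (j : ℤ)) / (ℓ : ℤ)) /
            qnum (q ^ ℓ) ((j : ℤ) / (ℓ : ℤ))
        else qnum q ((n : ℤ) - 2 * p + 1 + (j : ℤ)) / qnum q (j : ℤ)) ^ (dd n (p - j))) ≠ 0 := by
  have hq1 : q ≠ 1 := fun h => hq2 (by rw [h]; norm_num)
  have hqm1 : q ≠ -1 := fun h => hq2 (by rw [h]; norm_num)
  set u : ℂ := q ^ 2 with hu_def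
  have hu0 : u ≠ 0 := pow_ne_zero 2 hq
  have hu : u ^ ℓ = 1 := by rw [hu_def, ← pow_mul]; exact hℓ
  have huz : ∀ k : ℕ, u ^ k = q ^ (2 * k) := fun k => by rw [hu_def, ← pow_mul]
  -- key: for integers m, u^m = 1 ↔ ℓ ∣ m
  have key : ∀ m : ℤ, u ^ m = 1 ↔ (ℓ : ℤ) ∣ m := by
    intro m
    constructor
    · intro h
      have hdm : m = (ℓ : ℤ) * (m / ℓ) + m % ℓ := (Int.mul_ediv_add_emod m ℓ).symm
      have h1 : u ^ ((ℓ : ℤ) * (m / ℓ)) = 1 := by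
        rw [zpow_mul]
        have : u ^ (ℓ : ℤ) = 1 := by rw [zpow_natCast, hu]
        rw [this, one_zpow]
      have h2 : u ^ (m % ℓ) = 1 := by
        have := h
        rw [hdm, zpow_add₀ hu0, h1, one_mul] at this
        exact this
      have hr0 : (0:ℤ) ≤ m % ℓ := Int.emod_nonneg m (by exact_mod_cast hℓpos.ne')
      have hrlt : m % ℓ < ℓ := Int.emod_lt_of_pos m (by exact_mod_cast hℓpos)
      set r : ℕ := (m % ℓ).toNat with hr_def
      have hrc : ((r : ℤ)) = m % ℓ := Int.toNat_of_nonneg hr0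
      have h3 : u ^ r = 1 := by
        have := h2; rw [← hrc, zpow_natCast] at this; exact this
      have : r = 0 := by
        by_contra hrne
        have := hmin r (Nat.pos_of_ne_zero hrne) (by rw [← huz]; exact h3)
        omega
      have : m % ℓ = 0 := by omega
      exact Int.dvd_of_emod_eq_zero this
    · rintro ⟨s, rfl⟩
      rw [zpow_mul]
      have : u ^ (ℓ : ℤ) = 1 := by rw [zpow_natCast, hu]
      rw [this, one_zpow]
  -- u^m = q^m * q^m
  have huzz : ∀ m : ℤ, u ^ m = q ^ m * q ^ m := by
    intro m
    rw [hu_def, sq, mul_zpow]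
  -- qnum q m ≠ 0 when ℓ ∤ m
  have hqnum : ∀ m : ℤ, ¬ (ℓ : ℤ) ∣ m → qnum q m ≠ 0 := by
    intro m hm
    rw [qnum, if_neg (by tauto)]
    apply div_ne_zero
    · rw [sub_ne_zero]
      intro heq
      apply hm
      rw [← key m, huzz]
      nth_rewrite 2 [heq]
      rw [← zpow_add₀ hq, add_neg_cancel, zpow_zero]
    · rw [sub_ne_zero]
      intro heq
      apply hq2
      have : q * q = 1 := by
        nth_rewrite 2 [heq]
        exact mul_inv_cancel₀ hq
      rw [hu_def, sq]; exact this
  have hql : q ^ ℓ = 1 ∨ q ^ ℓ = -1 := by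
    have h : ((q ^ ℓ) - 1) * ((q ^ ℓ) + 1) = 0 := by
      have h2 : (q ^ ℓ) ^ 2 = 1 := by rw [← pow_mul, mul_comm]; exact hℓ
      linear_combination h2
    rcases mul_eq_zero.mp h with h | h
    · exact Or.inl (sub_eq_zero.mp h)
    · exact Or.inr (eq_neg_of_add_eq_zero_left h)
  have hqlne : q ^ ℓ ≠ 0 := pow_ne_zero ℓ hq
  have hN : (1:ℤ) ≤ (n:ℤ) - 2*p + 1 := by omega
  rw [Finset.prod_ne_zero_iff]
  intro j hj
  rw [Finset.mem_Icc] at hj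
  apply pow_ne_zero
  have hj1 : (1:ℤ) ≤ (j:ℤ) := by exact_mod_cast hj.1
  split_ifs with hd
  · have hcrit : ∀ a : ℤ, 1 ≤ a → (ℓ:ℤ) ∣ a → qnum (q ^ ℓ) (a / ℓ) ≠ 0 := by
      intro a ha hda
      rw [qnum, if_pos hql]
      apply mul_ne_zero
      · simp only [ne_eq, Int.cast_eq_zero]
        intro h0
        have hma := Int.ediv_mul_cancel hda
        rw [h0, zero_mul] at hma
        omega
      · exact zpow_ne_zero _ hqlne
    exact div_ne_zero (hcrit _ (by omega) (dvd_add hdiv hd)) (hcrit _ hj1 hd)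
  · refine div_ne_zero (hqnum _ ?_) (hqnum _ hd)
    intro hdN
    exact hd (by simpa using dvd_sub hdN hdiv)
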